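/- If n ≥ 1 is not a multiple of 3, then no n-transversal edge of the n-dimensional varietal hypercube VQ_n is contained in a cycle of length 5. -/
import Mathlib


/-- The relation `I = {(00,00),(01,01),(10,11),(11,10)}` on pairs of bits,
where a pair `(a, b)` records two consecutive bits (higher bit first). -/
def vqCross (p q : Bool × Bool) : Prop :=
  (p = (false, false) ∧ q = (false, false)) ∨
  (p = (false, true) ∧ q = (false, true)) ∨
  (p = (true, false) ∧ q = (true, true)) ∨
  (p = (true, true) ∧ q = (true, false))

/-- Adjacency in the varietal hypercube `VQ n`.  A vertex is a function
`Fin n → Bool`, the bit `x_k` (1-indexed, `x = x_n x_{n-1} ⋯ x_1`) being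
the value at index `k - 1`; the leading bit `x_n` is at index `n - 1`. -/
def vqAdj : (n : ℕ) → (Fin n → Bool) → (Fin n → Bool) → Prop
  | 0, _, _ => False
  | 1, x, y => x ≠ y
  | (n + 2), x, y =>
    if x (Fin.last (n + 1)) = y (Fin.last (n + 1)) then
      -- both in the same copy of `VQ (n+1)`
      vqAdj (n + 1) (fun i => x i.castSucc) (fun i => y i.castSucc)
    else
      if 3 ∣ (n + 2) then
        (∀ i : Fin (n + 2), i.val < n - 1 → x i = y i) ∧
        vqCross (x ⟨n, by omega⟩, x ⟨n - 1, by omega⟩)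
          (y ⟨n, by omega⟩, y ⟨n - 1, by omega⟩)
      else
        ∀ i : Fin (n + 1), x i.castSucc = y i.castSucc

/-- The `n`-dimensional varietal hypercube `VQ_n`. -/
def varietalCube (n : ℕ) : SimpleGraph (Fin n → Bool) :=
  SimpleGraph.fromRel (vqAdj n)

lemma vqCross_symm {p q : Bool × Bool} (h : vqCross p q) : vqCross q p := by
  obtain ⟨a, b⟩ := p; obtain ⟨c, d⟩ := q
  revert h; cases a <;> cases b <;> cases c <;> cases d <;> simp [vqCross]

lemma vqCross_fun {p q r : Bool × Bool} (h1 : vqCross p q) (h2 : vqCross p r) : q = r := by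
  obtain ⟨a, b⟩ := p; obtain ⟨c, d⟩ := q; obtain ⟨e, f⟩ := r
  revert h1 h2; cases a <;> cases b <;> cases c <;> cases d <;> cases e <;> cases f <;>
    simp [vqCross]

lemma bool_ne_ne {a b c : Bool} (h1 : a ≠ b) (h2 : a ≠ c) : b = c := by
  cases a <;> cases b <;> cases c <;> simp_all

/-- orientation normalization for crossing edges -/
lemma vqAdj_symm_cross {m : ℕ} {x y : Fin (m+2) → Bool}
    (ht : x (Fin.last (m+1)) ≠ y (Fin.last (m+1))) (h : vqAdj (m+2) y x) :
    vqAdj (m+2) x y := by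
  simp only [vqAdj] at h ⊢
  rw [if_neg ht]
  rw [if_neg (Ne.symm ht)] at h
  by_cases hd : 3 ∣ (m+2)
  · rw [if_pos hd] at h ⊢
    exact ⟨fun i hi => (h.1 i hi).symm, vqCross_symm h.2⟩
  · rw [if_neg hd] at h ⊢
    exact fun i => (h i).symm

/-- Lemma A: with `3 ∤ n`, a crossing edge preserves all lower bits. -/
lemma lemA {m : ℕ} (h3 : ¬ 3 ∣ (m+2)) {x y : Fin (m+2) → Bool}
    (hadj : (varietalCube (m+2)).Adj x y)
    (ht : x (Fin.last (m+1)) ≠ y (Fin.last (m+1))) :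
    ∀ i : Fin (m+1), x i.castSucc = y i.castSucc := by
  rw [varietalCube, SimpleGraph.fromRel_adj] at hadj
  have h : vqAdj (m+2) x y := hadj.2.elim id (vqAdj_symm_cross ht)
  simp only [vqAdj] at h
  rw [if_neg ht, if_neg h3] at h
  exact h

/-- Lemma C: an edge inside a copy projects to an edge of `VQ (m+1)`. -/
lemma lemC {m : ℕ} {x y : Fin (m+2) → Bool}
    (hadj : (varietalCube (m+2)).Adj x y)
    (ht : x (Fin.last (m+1)) = y (Fin.last (m+1))) :
    (varietalCube (m+1)).Adj (fun i => x i.castSucc) (fun i => y i.castSucc) := by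
  rw [varietalCube, SimpleGraph.fromRel_adj] at hadj ⊢
  obtain ⟨hne, hor⟩ := hadj
  refine ⟨?_, ?_⟩
  · intro heq
    apply hne
    funext i
    cases i using Fin.lastCases with
    | last => exact ht
    | cast j => exact congrFun heq j
  · rcases hor with h | h
    · simp only [vqAdj] at h; rw [if_pos ht] at h; exact Or.inl h
    · simp only [vqAdj] at h; rw [if_pos ht.symm] at h; exact Or.inr h

/-- Lemma B: crossing edges form a matching (each vertex has at most one
crossing neighbour), at every level. -/
lemma lemB {m : ℕ} {x y z : Fin (m+1) → Bool}
    (hxy : (varietalCube (m+1)).Adj x y) (hxz : (varietalCube (m+1)).Adj x z)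
    (hty : x (Fin.last m) ≠ y (Fin.last m)) (htz : x (Fin.last m) ≠ z (Fin.last m)) :
    y = z := by
  cases m with
  | zero =>
    have h := bool_ne_ne hty htz
    exact funext fun i => by rw [show i = Fin.last 0 from Fin.ext (by omega)]; exact h
  | succ m =>
    rw [varietalCube, SimpleGraph.fromRel_adj] at hxy hxz
    have hy : vqAdj (m+2) x y := hxy.2.elim id (vqAdj_symm_cross hty)
    have hz : vqAdj (m+2) x z := hxz.2.elim id (vqAdj_symm_cross htz)
    simp only [vqAdj] at hy hz
    rw [if_neg hty] at hy
    rw [if_neg htz] at hz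
    have htop : y (Fin.last (m+1)) = z (Fin.last (m+1)) := bool_ne_ne hty htz
    by_cases hd : 3 ∣ (m+2)
    · rw [if_pos hd] at hy hz
      have hpq := vqCross_fun hy.2 hz.2
      have h1 : y ⟨m, by omega⟩ = z ⟨m, by omega⟩ := congrArg Prod.fst hpq
      have h2 : y ⟨m - 1, by omega⟩ = z ⟨m - 1, by omega⟩ := congrArg Prod.snd hpq
      funext i
      by_cases hi : i.val < m - 1
      · exact (hy.1 i hi).symm.trans (hz.1 i hi)
      · have hm : 1 ≤ m := by omega
        have : i.val = m - 1 ∨ i.val = m ∨ i.val = m + 1 := by omega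
        rcases this with h | h | h
        · have : i = ⟨m - 1, by omega⟩ := Fin.ext h
          rw [this]; exact h2
        · have : i = ⟨m, by omega⟩ := Fin.ext h
          rw [this]; exact h1
        · have : i = Fin.last (m+1) := Fin.ext h
          rw [this]; exact htop
    · rw [if_neg hd] at hy hz
      funext i
      cases i using Fin.lastCases with
      | last => exact htop
      | cast j => exact (hy j).symm.trans (hz j)

/-- Lemma D: every varietal hypercube is triangle-free. -/
lemma lemD : ∀ (m : ℕ) (a b c : Fin m → Bool),
    (varietalCube m).Adj a b → (varietalCube m).Adj b c → (varietalCube m).Adj a c → False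
  | 0, a, b, c, hab, _, _ => by
    rw [varietalCube, SimpleGraph.fromRel_adj] at hab
    simp only [vqAdj] at hab
    exact hab.2.elim id id
  | 1, a, b, c, hab, hbc, hac => by
    have e : ∀ f g : Fin 1 → Bool, f 0 = g 0 → f = g := fun f g h =>
      funext fun i => by rw [show i = 0 from Fin.ext (by omega)]; exact h
    have dab := hab.ne
    have dbc := hbc.ne
    have dac := hac.ne
    cases ha : a 0 <;> cases hb : b 0 <;> cases hc : c 0 <;>
      first
      | exact dab (e _ _ (ha.trans hb.symm))
      | exact dbc (e _ _ (hb.trans hc.symm))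
      | exact dac (e _ _ (ha.trans hc.symm))
  | (m+2), a, b, c, hab, hbc, hac => by
    by_cases h1 : a (Fin.last (m+1)) = b (Fin.last (m+1)) <;>
    by_cases h2 : b (Fin.last (m+1)) = c (Fin.last (m+1))
    · exact lemD (m+1) _ _ _ (lemC hab h1) (lemC hbc h2) (lemC hac (h1.trans h2))
    · -- crossing edges bc and ac meet at c
      have h3 : a (Fin.last (m+1)) ≠ c (Fin.last (m+1)) := fun h => h2 (h1.symm.trans h)
      exact hab.ne (lemB hbc.symm hac.symm (Ne.symm h2) (Ne.symm h3)).symm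
    · -- crossing edges ab and ac meet at a
      have h3 : a (Fin.last (m+1)) ≠ c (Fin.last (m+1)) := fun h => h1 (h.trans h2.symm)
      exact hbc.ne (lemB hab hac h1 h3)
    · -- crossing edges ab and bc meet at b
      exact hac.ne (lemB hab.symm hbc (Ne.symm h1) h2)

/-- adjacent crossing edges contradiction -/
lemma lemM {m : ℕ} {a b c : Fin (m+2) → Bool}
    (hab : (varietalCube (m+2)).Adj a b) (hbc : (varietalCube (m+2)).Adj b c)
    (hac : a ≠ c)
    (t1 : a (Fin.last (m+1)) ≠ b (Fin.last (m+1)))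
    (t2 : b (Fin.last (m+1)) ≠ c (Fin.last (m+1))) : False :=
  hac (lemB hab.symm hbc (Ne.symm t1) t2)

/-- two non-adjacent crossing edges in a 5-cycle give a triangle downstairs -/
lemma lemT {m : ℕ} (h3 : ¬ 3 ∣ (m+2)) {a b c d e : Fin (m+2) → Bool}
    (hab : (varietalCube (m+2)).Adj a b) (hbc : (varietalCube (m+2)).Adj b c)
    (hcd : (varietalCube (m+2)).Adj c d) (hde : (varietalCube (m+2)).Adj d e)
    (hea : (varietalCube (m+2)).Adj e a)
    (tab : a (Fin.last (m+1)) ≠ b (Fin.last (m+1)))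
    (tbc : b (Fin.last (m+1)) = c (Fin.last (m+1)))
    (tcd : c (Fin.last (m+1)) ≠ d (Fin.last (m+1)))
    (tde : d (Fin.last (m+1)) = e (Fin.last (m+1)))
    (tea : e (Fin.last (m+1)) = a (Fin.last (m+1))) : False := by
  have pab : (fun i : Fin (m+1) => a i.castSucc) = (fun i => b i.castSucc) :=
    funext (lemA h3 hab tab)
  have pcd : (fun i : Fin (m+1) => c i.castSucc) = (fun i => d i.castSucc) :=
    funext (lemA h3 hcd tcd)
  have Abc := lemC hbc tbc
  have Ade := lemC hde tde
  have Aea := lemC hea tea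
  -- triangle on (πb, πc, πe)
  apply lemD (m+1) (fun i => b i.castSucc) (fun i => c i.castSucc) (fun i => e i.castSucc)
  · exact Abc
  · rw [pcd]; exact Ade
  · rw [← pab]; exact Aea.symm

/-- If `n ≥ 1` is not a multiple of `3`, no `n`-transversal edge of `VQ_n`
(an edge joining a vertex with leading bit `0` to one with leading bit `1`)
is contained in a cycle of length `5`. -/
theorem stmt7 (n : ℕ) (hn : 1 ≤ n) (h3 : ¬ 3 ∣ n) (x y : Fin n → Bool)
    (hx : x ⟨n - 1, by omega⟩ = false) (hy : y ⟨n - 1, by omega⟩ = true)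
    (hadj : (varietalCube n).Adj x y) :
    ¬ ∃ (v : Fin n → Bool) (C : (varietalCube n).Walk v v),
        C.IsCycle ∧ C.length = 5 ∧ s(x, y) ∈ C.edges := by
  rintro ⟨v, C, hcyc, hlen, hmem⟩
  cases C with
  | nil => simp at hlen
  | cons a01 p1 =>
  rename_i b1
  cases p1 with
  | nil => simp at hlen
  | cons a12 p2 =>
  rename_i b2
  cases p2 with
  | nil => simp at hlen
  | cons a23 p3 =>
  rename_i b3
  cases p3 with
  | nil => simp at hlen
  | cons a34 p4 =>
  rename_i b4
  cases p4 with
  | nil => simp at hlen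
  | cons a4v p5 =>
  rename_i b5
  cases p5 with
  | cons h q => simp [SimpleGraph.Walk.length_cons] at hlen
  | nil =>
  clear hlen
  have hnodup := hcyc.support_nodup
  simp [SimpleGraph.Walk.support_cons, SimpleGraph.Walk.support_nil, List.nodup_cons, not_or] at hnodup
  simp [SimpleGraph.Walk.edges_cons, SimpleGraph.Walk.edges_nil] at hmem
  obtain ⟨⟨d12, d13, d14, d1v⟩, ⟨d23, d24, d2v⟩, ⟨d34, d3v⟩, d4v⟩ := hnodup
  obtain _ | _ | m := n
  · omega
  · -- dimension 1: only two vertices, impossible to have 3 distinct ones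
    have e : ∀ f g : Fin 1 → Bool, f 0 = g 0 → f = g := fun f g h =>
      funext fun i => by rw [show i = 0 from Fin.ext (by omega)]; exact h
    cases hv : v 0 <;> cases h1 : b1 0 <;> cases h2 : b2 0 <;>
      first
      | exact d12 (e _ _ (h1.trans h2.symm))
      | exact d1v (e _ _ (h1.trans hv.symm))
      | exact d2v (e _ _ (h2.trans hv.symm))
  · have hx' : x (Fin.last (m+1)) = false := hx
    have hy' : y (Fin.last (m+1)) = true := hy
    have H : v (Fin.last (m+1)) ≠ b1 (Fin.last (m+1)) ∨
        b1 (Fin.last (m+1)) ≠ b2 (Fin.last (m+1)) ∨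
        b2 (Fin.last (m+1)) ≠ b3 (Fin.last (m+1)) ∨
        b3 (Fin.last (m+1)) ≠ b4 (Fin.last (m+1)) ∨
        b4 (Fin.last (m+1)) ≠ v (Fin.last (m+1)) := by
      rcases hmem with (⟨rfl, rfl⟩ | ⟨rfl, rfl⟩) | (⟨rfl, rfl⟩ | ⟨rfl, rfl⟩) |
        (⟨rfl, rfl⟩ | ⟨rfl, rfl⟩) | (⟨rfl, rfl⟩ | ⟨rfl, rfl⟩) |
        (⟨rfl, rfl⟩ | ⟨rfl, rfl⟩) <;> simp [hx', hy']
    cases e0 : v (Fin.last (m+1)) <;> cases e1 : b1 (Fin.last (m+1)) <;>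
    cases e2 : b2 (Fin.last (m+1)) <;> cases e3 : b3 (Fin.last (m+1)) <;>
    cases e4 : b4 (Fin.last (m+1)) <;>
    first
    | (rcases H with h | h | h | h | h <;> simp [e0, e1, e2, e3, e4] at h <;> done)
    | (apply lemM a01 a12 (Ne.symm d2v) <;> simp [e0, e1, e2] <;> done)
    | (apply lemM a12 a23 d13 <;> simp [e1, e2, e3] <;> done)
    | (apply lemM a23 a34 d24 <;> simp [e2, e3, e4] <;> done)
    | (apply lemM a34 a4v d3v <;> simp [e3, e4, e0] <;> done)
    | (apply lemM a4v a01 (Ne.symm d14) <;> simp [e4, e0, e1] <;> done)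
    | (apply lemT h3 a01 a12 a23 a34 a4v <;> simp [e0, e1, e2, e3, e4] <;> done)
    | (apply lemT h3 a12 a23 a34 a4v a01 <;> simp [e0, e1, e2, e3, e4] <;> done)
    | (apply lemT h3 a23 a34 a4v a01 a12 <;> simp [e0, e1, e2, e3, e4] <;> done)
    | (apply lemT h3 a34 a4v a01 a12 a23 <;> simp [e0, e1, e2, e3, e4] <;> done)
    | (apply lemT h3 a4v a01 a12 a23 a34 <;> simp [e0, e1, e2, e3, e4] <;> done)
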